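/- arXiv:1305.6502 — 2 statements merged into one kernel-verified Lean document; each statement's English description precedes it below -/
import Mathlib

section
/- Let Ψ be a branching mechanism and let u be a flow for Ψ. Let t ≥ 0 and λ > 0 be such that Ψ(λ) ≠ 0. Then Ψ does not vanish on the closed interval with endpoints u(t,λ) and λ, and the interval integral ∫_{u(t,λ)}^{λ} dw/Ψ(w) equals t. -/
open MeasureTheory Set Filter Topology
open scoped ENNReal NNReal

/-- The Lévy–Khintchine shape of a branching mechanism:
`Ψ(λ) = αλ + βλ² + ∫_{(0,∞)} (e^{−λr} − 1 + λr·1_{r<1}) π(dr)`. -/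
noncomputable def psiShape (a b : ℝ) (piM : Measure ℝ) (l : ℝ) : ℝ :=
  a * l + b * l ^ 2 +
    ∫ r, (Real.exp (-l * r) - 1 + (if r < 1 then l * r else 0)) ∂piM

/-- `Ψ` is a branching mechanism with parameters `a = α`, `b = β` and Lévy measure `piM = π`:
`β ≥ 0`, `π` is carried by `(0,∞)`, `∫ (1 ∧ r²) π(dr) < ∞`, and `Ψ` has the
Lévy–Khintchine form on `[0,∞)`. -/
def IsBranchingMechanism (Ψ : ℝ → ℝ) (a b : ℝ) (piM : Measure ℝ) : Prop :=
  0 ≤ b ∧ piM (Set.Ioi (0:ℝ))ᶜ = 0 ∧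
    (∫⁻ r, ENNReal.ofReal (min 1 (r ^ 2)) ∂piM) < ⊤ ∧
    ∀ l, 0 ≤ l → Ψ l = psiShape a b piM l

/-- Non-linearity of the branching mechanism: `β > 0` or `π ≠ 0`. -/
def IsNonLinear (b : ℝ) (piM : Measure ℝ) : Prop := 0 < b ∨ piM ≠ 0

/-- Finite variation type: `β = 0` and `∫_{(0,1)} r π(dr) < ∞`. -/
def FiniteVariationType (b : ℝ) (piM : Measure ℝ) : Prop :=
  b = 0 ∧ (∫⁻ r in Set.Ioo (0:ℝ) 1, ENNReal.ofReal r ∂piM) < ⊤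

/-- The drift constant `D = α + ∫_{(0,1)} r π(dr)` (finite variation cases). -/
noncomputable def Dconst (a : ℝ) (piM : Measure ℝ) : ℝ :=
  a + ∫ r in Set.Ioo (0:ℝ) 1, r ∂piM

/-- `u` is a flow for `Ψ`: for every `λ > 0`, `u(0,λ) = λ`, `u(t,λ) > 0` and
`∂_t u(t,λ) = −Ψ(u(t,λ))` on `[0,∞)`. -/
def IsFlow (Ψ : ℝ → ℝ) (u : ℝ → ℝ → ℝ) : Prop :=
  (∀ l, 0 < l → u 0 l = l) ∧
  (∀ l, 0 < l → ∀ t, 0 ≤ t → 0 < u t l) ∧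
  (∀ l, 0 < l → ∀ t, 0 ≤ t →
    HasDerivWithinAt (fun s => u s l) (-(Ψ (u t l))) (Set.Ici 0) t)

noncomputable def gfun (l r : ℝ) : ℝ :=
  Real.exp (-l * r) - 1 + (if r < 1 then l * r else 0)

lemma gfun_meas (l : ℝ) : Measurable (gfun l) := by
  unfold gfun
  refine Measurable.add (Measurable.sub ?_ measurable_const) ?_
  · exact (measurable_id.const_mul (-l)).exp
  · exact Measurable.ite measurableSet_Iio (measurable_id.const_mul l) measurable_const

lemma aux_xexp {x : ℝ} (hx : 0 ≤ x) : x * Real.exp (-x) ≤ 1 := by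
  have h := Real.add_one_le_exp x
  have h2 := Real.exp_pos x
  rw [Real.exp_neg]
  have h3 := mul_inv_cancel₀ (ne_of_gt h2)
  nlinarith [mul_le_mul_of_nonneg_right h (inv_pos.mpr h2).le, inv_pos.mpr h2]

lemma aux_one_sub_exp {x : ℝ} : 1 - Real.exp (-x) ≤ x := by
  have h := Real.add_one_le_exp (-x); linarith

lemma aux_exp_quad {x : ℝ} (hx : 0 ≤ x) : Real.exp (-x) - 1 + x ≤ x ^ 2 := by
  have h := Real.add_one_le_exp x
  have h2 := Real.exp_pos x
  have h3 : Real.exp (-x) = (Real.exp x)⁻¹ := Real.exp_neg x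
  have h4 := mul_inv_cancel₀ (ne_of_gt h2)
  nlinarith [mul_le_mul_of_nonneg_right h (inv_pos.mpr h2).le, inv_pos.mpr h2,
    mul_le_mul_of_nonneg_left h (inv_pos.mpr h2).le]

lemma gfun_abs_le {l r : ℝ} (hl : 0 ≤ l) (hr : 0 < r) :
    |gfun l r| ≤ max 1 (l ^ 2) * min 1 (r ^ 2) := by
  unfold gfun
  by_cases h : r < 1
  · rw [if_pos h]
    have hr2 : r ^ 2 ≤ 1 := by nlinarith
    rw [min_eq_right hr2]
    have hx : 0 ≤ l * r := mul_nonneg hl hr.le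
    have h1 : 0 ≤ Real.exp (-(l * r)) - 1 + l * r := by
      have := Real.add_one_le_exp (-(l*r)); linarith
    have h2 : Real.exp (-(l * r)) - 1 + l * r ≤ (l * r) ^ 2 := aux_exp_quad hx
    rw [abs_of_nonneg (by rw [neg_mul]; linarith [h1])]
    have : l ^ 2 ≤ max 1 (l ^ 2) := le_max_right _ _
    rw [neg_mul]
    nlinarith [sq_nonneg r, sq_nonneg l]
  · rw [if_neg h]
    push_neg at h
    have hr2 : (1:ℝ) ≤ r ^ 2 := by nlinarith
    rw [min_eq_left hr2, add_zero]
    have h1 : Real.exp (-l * r) ≤ 1 :=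
      Real.exp_le_one_iff.mpr (by nlinarith)
    have h2 : 0 < Real.exp (-l * r) := Real.exp_pos _
    rw [abs_le]
    constructor <;> nlinarith [le_max_left 1 (l ^ 2)]

lemma integrable_minsq (piM : Measure ℝ)
    (h : (∫⁻ r, ENNReal.ofReal (min 1 (r ^ 2)) ∂piM) < ⊤) :
    Integrable (fun r => min 1 (r ^ 2)) piM := by
  refine ⟨(measurable_const.min (measurable_id.pow_const 2)).aestronglyMeasurable, ?_⟩
  rw [hasFiniteIntegral_iff_ofReal (Eventually.of_forall fun r => le_min zero_le_one (sq_nonneg r))]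
  exact h

lemma gfun_integrable {piM : Measure ℝ} (hcarr : piM (Set.Ioi (0:ℝ))ᶜ = 0)
    (h : (∫⁻ r, ENNReal.ofReal (min 1 (r ^ 2)) ∂piM) < ⊤) {l : ℝ} (hl : 0 ≤ l) :
    Integrable (gfun l) piM := by
  have hset : {r : ℝ | ¬ 0 < r} = (Set.Ioi (0:ℝ))ᶜ := by ext r; simp
  have hae : ∀ᵐ r ∂piM, 0 < r := by rw [ae_iff, hset]; exact hcarr
  refine ((integrable_minsq piM h).const_mul (max 1 (l ^ 2))).mono'
    (gfun_meas l).aestronglyMeasurable ?_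
  filter_upwards [hae] with r hr
  rw [Real.norm_eq_abs]
  exact gfun_abs_le hl hr

lemma gfun_hasDerivAt (r l : ℝ) :
    HasDerivAt (fun l => gfun l r)
      (-r * Real.exp (-l * r) + (if r < 1 then r else 0)) l := by
  unfold gfun
  by_cases h : r < 1 <;> simp only [h, if_true, if_false]
  · have h1 : HasDerivAt (fun l : ℝ => -l * r) (-r) l := by
      simpa using ((hasDerivAt_id l).neg.mul_const r)
    have h2 := h1.exp
    have h3 : HasDerivAt (fun l : ℝ => l * r) r l := by
      simpa using (hasDerivAt_id l).mul_const r
    refine HasDerivAt.congr_deriv ((h2.sub_const 1).add h3) ?_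
    ring
  · have h1 : HasDerivAt (fun l : ℝ => -l * r) (-r) l := by
      simpa using ((hasDerivAt_id l).neg.mul_const r)
    have h2 := h1.exp
    refine HasDerivAt.congr_deriv ((h2.sub_const 1).add_const 0) ?_
    ring

lemma gfun_deriv_bound {m M r l : ℝ} (hm : 0 < m) (hr : 0 < r) (hl : l ∈ Set.Icc m M) :
    |(-r * Real.exp (-l * r) + (if r < 1 then r else 0))| ≤ (M + 1/m) * min 1 (r ^ 2) := by
  obtain ⟨hlm, hlM⟩ := hl
  have hl0 : 0 < l := lt_of_lt_of_le hm hlm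
  have hM : 0 < M := lt_of_lt_of_le hl0 hlM
  by_cases h : r < 1
  · rw [if_pos h, min_eq_right (by nlinarith)]
    have h1 : Real.exp (-l * r) ≤ 1 := Real.exp_le_one_iff.mpr (by nlinarith)
    have h2 : 1 - Real.exp (-l * r) ≤ l * r := by rw [neg_mul]; exact aux_one_sub_exp
    rw [abs_of_nonneg (by nlinarith [mul_le_mul_of_nonneg_left h1 hr.le])]
    have hinv : 0 < 1/m := by positivity
    nlinarith [mul_le_mul_of_nonneg_left h2 hr.le, sq_nonneg r, Real.exp_pos (-l*r)]
  · rw [if_neg h, min_eq_left (by push_neg at h; nlinarith), add_zero, neg_mul, abs_neg, abs_mul,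
      abs_of_nonneg hr.le, abs_of_nonneg (Real.exp_pos _).le]
    push_neg at h
    -- r * exp(-l*r) ≤ r * exp(-m*r) ≤ 1/m
    have h1 : Real.exp (-l * r) ≤ Real.exp (-(m * r)) := by
      apply Real.exp_le_exp.mpr; nlinarith
    have h2 : (m * r) * Real.exp (-(m * r)) ≤ 1 := aux_xexp (by positivity)
    have h3 : r * Real.exp (-(m*r)) ≤ 1/m := by
      rw [le_div_iff₀ hm]; nlinarith [Real.exp_pos (-(m*r))]
    calc r * Real.exp (-l * r) ≤ r * Real.exp (-(m*r)) := by nlinarith [Real.exp_pos (-(m*r))]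
    _ ≤ 1/m := h3
    _ ≤ (M + 1/m) * 1 := by nlinarith

lemma psi_lipschitz {Ψ : ℝ → ℝ} {a b : ℝ} {piM : Measure ℝ}
    (hbm : IsBranchingMechanism Ψ a b piM) {m M : ℝ} (hm : 0 < m) (hmM : m ≤ M) :
    ∃ K : ℝ≥0, LipschitzOnWith K Ψ (Set.Icc m M) := by
  obtain ⟨hb, hcarr, hfin, hform⟩ := hbm
  have hM : 0 < M := lt_of_lt_of_le hm hmM
  set C : ℝ := M + 1/m with hC
  have hC0 : 0 ≤ C := by positivity
  set J : ℝ := ∫ r, min 1 (r ^ 2) ∂piM with hJ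
  have hJ0 : 0 ≤ J := integral_nonneg fun r => le_min zero_le_one (sq_nonneg r)
  set K : ℝ := |a| + 2 * b * M + C * J with hKdef
  have hK0 : 0 ≤ K := by positivity
  refine ⟨K.toNNReal, LipschitzOnWith.of_dist_le_mul fun x hx y hy => ?_⟩
  rw [Real.coe_toNNReal _ hK0, Real.dist_eq, Real.dist_eq]
  have hx0 : 0 ≤ x := (lt_of_lt_of_le hm hx.1).le
  have hy0 : 0 ≤ y := (lt_of_lt_of_le hm hy.1).le
  have hset : {r : ℝ | ¬ 0 < r} = (Set.Ioi (0:ℝ))ᶜ := by ext r; simp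
  have hae : ∀ᵐ r ∂piM, 0 < r := by rw [ae_iff, hset]; exact hcarr
  -- pointwise MVT bound for the integrand
  have hptw : ∀ r : ℝ, 0 < r → |gfun x r - gfun y r| ≤ C * min 1 (r ^ 2) * |x - y| := by
    intro r hr
    have := Convex.norm_image_sub_le_of_norm_hasDerivWithin_le
      (f := fun l => gfun l r)
      (f' := fun l => -r * Real.exp (-l * r) + (if r < 1 then r else 0))
      (s := Set.Icc m M)
      (fun z hz => (gfun_hasDerivAt r z).hasDerivWithinAt)
      (fun z hz => by
        rw [Real.norm_eq_abs]; exact gfun_deriv_bound hm hr hz)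
      (convex_Icc m M) hy hx
    rw [Real.norm_eq_abs, Real.norm_eq_abs] at this
    rw [← hC] at this
    exact this
  have hix := gfun_integrable hcarr hfin hx0
  have hiy := gfun_integrable hcarr hfin hy0
  -- bound on integral difference
  have hIdiff : |(∫ r, gfun x r ∂piM) - ∫ r, gfun y r ∂piM| ≤ C * J * |x - y| := by
    rw [← integral_sub hix hiy]
    calc |∫ r, (gfun x r - gfun y r) ∂piM|
        ≤ ∫ r, |gfun x r - gfun y r| ∂piM := by
          simpa [Real.norm_eq_abs] using norm_integral_le_integral_norm (fun r => gfun x r - gfun y r) (μ := piM)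
      _ ≤ ∫ r, (C * |x - y|) * min 1 (r ^ 2) ∂piM := by
          refine integral_mono_ae (hix.sub hiy).abs
            (((integrable_minsq piM hfin).const_mul _)) ?_
          filter_upwards [hae] with r hr
          calc |gfun x r - gfun y r| ≤ C * min 1 (r ^ 2) * |x - y| := hptw r hr
            _ = (C * |x - y|) * min 1 (r ^ 2) := by ring
      _ = C * J * |x - y| := by rw [MeasureTheory.integral_const_mul]; ring
  have hfx : Ψ x = psiShape a b piM x := hform x hx0
  have hfy : Ψ y = psiShape a b piM y := hform y hy0
  rw [hfx, hfy]
  unfold psiShape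
  have h2 : |a * x + b * x ^ 2 - (a * y + b * y ^ 2)| ≤ (|a| + 2 * b * M) * |x - y| := by
    have he : a * x + b * x ^ 2 - (a * y + b * y ^ 2) = (a + b * (x + y)) * (x - y) := by ring
    rw [he, abs_mul]
    have h3 : |a + b * (x + y)| ≤ |a| + 2 * b * M := by
      calc |a + b * (x + y)| ≤ |a| + |b * (x + y)| := abs_add_le _ _
        _ ≤ |a| + 2 * b * M := by
            rw [abs_mul, abs_of_nonneg hb,
              abs_of_nonneg (by linarith [hx.1, hy.1] : (0:ℝ) ≤ x + y)]
            nlinarith [hx.2, hy.2]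
    exact mul_le_mul_of_nonneg_right h3 (abs_nonneg _)
  have hgx : (∫ r, (Real.exp (-x * r) - 1 + (if r < 1 then x * r else 0)) ∂piM) = ∫ r, gfun x r ∂piM := rfl
  have hgy : (∫ r, (Real.exp (-y * r) - 1 + (if r < 1 then y * r else 0)) ∂piM) = ∫ r, gfun y r ∂piM := rfl
  rw [hgx, hgy]
  calc |a * x + b * x ^ 2 + (∫ r, gfun x r ∂piM) - (a * y + b * y ^ 2 + ∫ r, gfun y r ∂piM)|
      ≤ |a * x + b * x ^ 2 - (a * y + b * y ^ 2)| + |(∫ r, gfun x r ∂piM) - ∫ r, gfun y r ∂piM| := by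
        have : a * x + b * x ^ 2 + (∫ r, gfun x r ∂piM) - (a * y + b * y ^ 2 + ∫ r, gfun y r ∂piM)
            = (a * x + b * x ^ 2 - (a * y + b * y ^ 2)) + ((∫ r, gfun x r ∂piM) - ∫ r, gfun y r ∂piM) := by ring
        rw [this]; exact abs_add_le _ _
    _ ≤ (|a| + 2 * b * M) * |x - y| + C * J * |x - y| := add_le_add h2 hIdiff
    _ = K * |x - y| := by rw [hKdef]; ring

/-- for a branching mechanism `Ψ`, a flow `u` for `Ψ`, `t ≥ 0` and `λ > 0`
with `Ψ(λ) ≠ 0`, the mechanism `Ψ` does not vanish on the closed interval with endpoints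
`u(t,λ)` and `λ`, and `∫_{u(t,λ)}^{λ} dw/Ψ(w) = t`. -/
theorem csbp_flow_integral_equation
    (Ψ : ℝ → ℝ) (a b : ℝ) (piM : Measure ℝ) (u : ℝ → ℝ → ℝ)
    (hbm : IsBranchingMechanism Ψ a b piM) (hu : IsFlow Ψ u)
    (t l : ℝ) (ht : 0 ≤ t) (hl : 0 < l) (hΨl : Ψ l ≠ 0) :
    (∀ w ∈ Set.uIcc (u t l) l, Ψ w ≠ 0) ∧
      (∫ w in (u t l)..l, (Ψ w)⁻¹) = t := by
  obtain ⟨hu0, hupos, hud⟩ := hu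
  set f : ℝ → ℝ := fun s => u s l with hfdef
  show (∀ w ∈ Set.uIcc (f t) l, Ψ w ≠ 0) ∧ (∫ w in (f t)..l, (Ψ w)⁻¹) = t
  have hf0 : f 0 = l := hu0 l hl
  have hfpos : ∀ s ∈ Set.Icc (0:ℝ) t, 0 < f s := fun s hs => hupos l hl s hs.1
  have hfd : ∀ s, 0 ≤ s → HasDerivWithinAt f (-(Ψ (f s))) (Set.Ici 0) s :=
    fun s hs => hud l hl s hs
  have hfc : ContinuousOn f (Set.Icc 0 t) := fun s hs =>
    ((hfd s hs.1).continuousWithinAt).mono Icc_subset_Ici_self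
  have hne : (Set.Icc (0:ℝ) t).Nonempty := ⟨0, left_mem_Icc.mpr ht⟩
  obtain ⟨sA, hsA, hAmin⟩ := isCompact_Icc.exists_isMinOn hne hfc
  obtain ⟨sB, hsB, hBmax⟩ := isCompact_Icc.exists_isMaxOn hne hfc
  set A := f sA with hAdef
  set B := f sB with hBdef
  have hA0 : 0 < A := hfpos sA hsA
  have hAB : ∀ s ∈ Set.Icc (0:ℝ) t, f s ∈ Set.Icc A B := fun s hs =>
    ⟨isMinOn_iff.mp hAmin s hs, isMaxOn_iff.mp hBmax s hs⟩
  have hABle : A ≤ B := isMinOn_iff.mp hAmin sB hsB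
  obtain ⟨K, hK⟩ := psi_lipschitz hbm hA0 hABle
  obtain ⟨K₂, hK₂⟩ := psi_lipschitz hbm (by linarith : (0:ℝ) < A/2) (by linarith : A/2 ≤ B+1)
  have hΨcontAt : ∀ x ∈ Set.Icc A B, ContinuousAt Ψ x := fun x hx =>
    hK₂.continuousOn.continuousAt (Icc_mem_nhds (by linarith [hx.1]) (by linarith [hx.2]))
  have hKneg : LipschitzOnWith K (fun x => -Ψ x) (Set.Icc A B) := by
    rw [← one_mul K]
    exact LipschitzWith.id.neg.comp_lipschitzOnWith hK
  -- Ψ does not vanish along the flow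
  have key : ∀ s ∈ Set.Icc (0:ℝ) t, Ψ (f s) ≠ 0 := by
    intro s₀ hs₀ h0
    rcases eq_or_lt_of_le hs₀.1 with heq | hpos
    · exact hΨl (by rwa [← heq, hf0] at h0)
    · have hflow : Set.EqOn f (fun _ => f s₀) (Set.Icc 0 s₀) := by
        apply ODE_solution_unique_of_mem_Icc_left (v := fun _ x => -Ψ x)
          (s := fun _ => Set.Icc A B) (fun _ _ => hKneg)
        · exact hfc.mono (Icc_subset_Icc_right hs₀.2)
        · intro τ hτ
          exact ((hfd τ hτ.1.le).hasDerivAt (Ici_mem_nhds hτ.1)).hasDerivWithinAt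
        · intro τ hτ; exact hAB τ ⟨hτ.1.le, hτ.2.trans hs₀.2⟩
        · exact continuousOn_const
        · intro τ hτ
          simpa [h0] using (hasDerivWithinAt_const τ (Set.Iic τ) (f s₀))
        · intro τ hτ; exact hAB s₀ hs₀
        · rfl
      have h00 : f 0 = f s₀ := hflow ⟨le_refl 0, hpos.le⟩
      exact hΨl (by rw [← hf0, h00]; exact h0)
  -- every point of Icc A B is a value of the flow
  have hIccsub : Set.Icc A B ⊆ f '' Set.Icc 0 t := by
    have h1 : Set.uIcc sA sB ⊆ Set.Icc 0 t := by
      rw [← Set.uIcc_of_le ht]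
      exact Set.uIcc_subset_uIcc (by rw [Set.uIcc_of_le ht]; exact hsA)
        (by rw [Set.uIcc_of_le ht]; exact hsB)
    have h2 := intermediate_value_uIcc (hfc.mono h1)
    have h3 : Set.Icc A B ⊆ f '' Set.uIcc sA sB := by
      rw [← Set.uIcc_of_le hABle]; exact h2
    exact h3.trans (Set.image_mono h1)
  have hne0 : ∀ x ∈ Set.Icc A B, Ψ x ≠ 0 := by
    intro x hx
    obtain ⟨s, hs, rfl⟩ := hIccsub hx
    exact key s hs
  -- part 1
  have part1 : ∀ w ∈ Set.uIcc (f t) l, Ψ w ≠ 0 := by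
    intro w hw
    have hsub : Set.uIcc (f t) (f 0) ⊆ f '' Set.uIcc t 0 := by
      apply intermediate_value_uIcc
      rw [Set.uIcc_comm, Set.uIcc_of_le ht]
      exact hfc
    rw [hf0] at hsub
    obtain ⟨s, hs, rfl⟩ := hsub hw
    rw [Set.uIcc_comm, Set.uIcc_of_le ht] at hs
    exact key s hs
  refine ⟨part1, ?_⟩
  -- part 2
  have hlAB : l ∈ Set.Icc A B := hf0 ▸ hAB 0 ⟨le_refl 0, ht⟩
  set φ : ℝ → ℝ := fun x => ∫ w in l..x, (Ψ w)⁻¹ with hφdef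
  have hinv_contOn : ContinuousOn (fun w => (Ψ w)⁻¹) (Set.Icc A B) := fun x hx =>
    ((hΨcontAt x hx).inv₀ (hne0 x hx)).continuousWithinAt
  have hφd : ∀ x ∈ Set.Icc A B, HasDerivAt φ ((Ψ x)⁻¹) x := by
    intro x hx
    refine intervalIntegral.integral_hasDerivAt_right ?_ ?_ ((hΨcontAt x hx).inv₀ (hne0 x hx))
    · refine (hinv_contOn.mono ?_).intervalIntegrable
      rw [← Set.uIcc_of_le hABle]
      exact Set.uIcc_subset_uIcc (by rw [Set.uIcc_of_le hABle]; exact hlAB)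
        (by rw [Set.uIcc_of_le hABle]; exact hx)
    · exact ⟨Set.Icc (A/2) (B+1), Icc_mem_nhds (by linarith [hx.1]) (by linarith [hx.2]),
        ((hK₂.continuousOn.aemeasurable measurableSet_Icc).inv).aestronglyMeasurable⟩
  set G : ℝ → ℝ := fun s => φ (f s) + s with hGdef
  have hφcont : ContinuousOn φ (Set.Icc A B) := fun x hx =>
    (hφd x hx).continuousAt.continuousWithinAt
  have hGcont : ContinuousOn G (Set.Icc 0 t) :=
    (hφcont.comp hfc (fun s hs => hAB s hs)).add continuousOn_id
  have hGd : ∀ s ∈ Set.Ico (0:ℝ) t, HasDerivWithinAt G 0 (Set.Ici s) s := by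
    intro s hs
    have h1 := (hφd (f s) (hAB s ⟨hs.1, hs.2.le⟩)).comp_hasDerivWithinAt s (hfd s hs.1)
    have h2 := h1.add (hasDerivWithinAt_id s (Set.Ici 0))
    have h3 : (Ψ (f s))⁻¹ * (-(Ψ (f s))) + 1 = 0 := by
      rw [mul_neg, inv_mul_cancel₀ (key s ⟨hs.1, hs.2.le⟩)]; ring
    rw [h3] at h2
    exact h2.mono (Set.Ici_subset_Ici.mpr hs.1)
  have hconst := constant_of_has_deriv_right_zero hGcont hGd t (right_mem_Icc.mpr ht)
  have hG0 : G 0 = 0 := by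
    simp only [hGdef, hf0, hφdef, intervalIntegral.integral_same, add_zero]
  rw [hG0] at hconst
  have hφft : φ (f t) = -t := by
    have : φ (f t) + t = 0 := hconst
    linarith
  rw [intervalIntegral.integral_symm]
  show -φ (f t) = t
  rw [hφft]; ring
end

section
/- Let Ψ be a non-linear branching mechanism, let u be a flow for Ψ, and suppose Ψ(λ) > 0 for all λ ≥ θ₀, for some θ₀ > 0. For t > 0 set v(t) := lim_{λ→∞} u(t,λ) ∈ (0,∞] (the limit exists since λ ↦ u(t,λ) is nondecreasing). If ∫_{θ₀}^{∞} dλ/Ψ(λ) < ∞, then for every t > 0 one has v(t) < ∞ and ∫_{v(t)}^{∞} dλ/Ψ(λ) = t. If ∫_{θ₀}^{∞} dλ/Ψ(λ) = ∞, then v(t) = ∞ for every t > 0. -/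
open MeasureTheory Set Filter Topology
open scoped ENNReal NNReal

/- ### Auxiliary lemmas -/

lemma exp_bound_aux {x : ℝ} (hx : 0 ≤ x) :
    0 ≤ Real.exp (-x) - 1 + x ∧ Real.exp (-x) - 1 + x ≤ x ^ 2 := by
  constructor
  · have := Real.add_one_le_exp (-x); linarith
  · rcases le_or_gt x 1 with h | h
    · have := Real.abs_exp_sub_one_sub_id_le (x := -x) (by rw [abs_neg, abs_of_nonneg hx]; exact h)
      rw [abs_le] at this
      nlinarith [this.2]
    · have h1 : Real.exp (-x) ≤ 1 := Real.exp_le_one_iff.mpr (by linarith)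
      nlinarith

lemma lk_meas (l : ℝ) :
    Measurable (fun r : ℝ => Real.exp (-l * r) - 1 + (if r < 1 then l * r else 0)) := by
  apply Measurable.add
  · exact (Real.measurable_exp.comp (measurable_const.mul measurable_id)).sub measurable_const
  · exact Measurable.ite measurableSet_Iio (measurable_const.mul measurable_id) measurable_const

lemma lk_integrable {piM : Measure ℝ}
    (hcarr : piM (Set.Ioi (0:ℝ))ᶜ = 0)
    (hfin : (∫⁻ r, ENNReal.ofReal (min 1 (r ^ 2)) ∂piM) < ⊤)
    {l : ℝ} (hl : 0 ≤ l) :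
    Integrable (fun r => Real.exp (-l * r) - 1 + (if r < 1 then l * r else 0)) piM := by
  have hminmeas : Measurable fun r : ℝ => min 1 (r ^ 2) :=
    measurable_const.min (measurable_id.pow_const 2)
  have hmin_int : Integrable (fun r : ℝ => min 1 (r ^ 2)) piM := by
    refine ⟨hminmeas.aestronglyMeasurable, ?_⟩
    rw [hasFiniteIntegral_iff_ofReal]
    · exact hfin
    · exact Eventually.of_forall fun r => le_min zero_le_one (sq_nonneg r)
  have hg_int : Integrable (fun r : ℝ => max 1 (l ^ 2) * min 1 (r ^ 2)) piM :=
    hmin_int.const_mul _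
  refine hg_int.mono' (lk_meas l).aestronglyMeasurable ?_
  have hae : ∀ᵐ r ∂piM, r ∈ Set.Ioi (0:ℝ) := mem_ae_iff.mpr hcarr
  filter_upwards [hae] with r hr
  have hr0 : 0 < r := hr
  rcases lt_or_ge r 1 with h1 | h1
  · simp only [if_pos h1]
    have hlr : 0 ≤ l * r := mul_nonneg hl hr0.le
    obtain ⟨hb1, hb2⟩ := exp_bound_aux hlr
    rw [show -l * r = -(l * r) by ring]
    rw [Real.norm_eq_abs, abs_of_nonneg hb1]
    have : min 1 (r ^ 2) = r ^ 2 := min_eq_right (by nlinarith)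
    rw [this]
    calc Real.exp (-(l * r)) - 1 + l * r ≤ (l * r) ^ 2 := hb2
      _ = l ^ 2 * r ^ 2 := by ring
      _ ≤ max 1 (l ^ 2) * r ^ 2 := by nlinarith [le_max_right 1 (l ^ 2), sq_nonneg r]
  · simp only [if_neg (not_lt.mpr h1)]
    have hexp : Real.exp (-l * r) ≤ 1 := Real.exp_le_one_iff.mpr (by nlinarith)
    have hexp0 : 0 < Real.exp (-l * r) := Real.exp_pos _
    have : min 1 (r ^ 2) = 1 := min_eq_left (by nlinarith)
    rw [this, Real.norm_eq_abs, abs_le]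
    constructor <;> nlinarith [le_max_left 1 (l ^ 2)]

lemma lk_convex {Ψ : ℝ → ℝ} {a b : ℝ} {piM : Measure ℝ}
    (hbm : IsBranchingMechanism Ψ a b piM) : ConvexOn ℝ (Ici 0) Ψ := by
  obtain ⟨hb, hcarr, hfin, hshape⟩ := hbm
  refine ⟨convex_Ici 0, ?_⟩
  intro x hx y hy s t hs ht hst
  simp only [smul_eq_mul]
  have hx' : (0:ℝ) ≤ x := hx
  have hy' : (0:ℝ) ≤ y := hy
  have hz : (0:ℝ) ≤ s * x + t * y := by positivity
  rw [hshape _ hx', hshape _ hy', hshape _ hz]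
  unfold psiShape
  set f : ℝ → ℝ → ℝ := fun l r => Real.exp (-l * r) - 1 + (if r < 1 then l * r else 0) with hf
  have hix := lk_integrable hcarr hfin hx'
  have hiy := lk_integrable hcarr hfin hy'
  have hiz := lk_integrable hcarr hfin hz
  have hcomb : Integrable (fun r => s * f x r + t * f y r) piM :=
    (hix.const_mul s).add (hiy.const_mul t)
  have hptw : ∀ r, f (s * x + t * y) r ≤ s * f x r + t * f y r := by
    intro r
    have hexp := convexOn_exp.2 (mem_univ (-(x * r))) (mem_univ (-(y * r))) hs ht hst
    simp only [smul_eq_mul] at hexp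
    have harg : s * -(x * r) + t * -(y * r) = -((s * x + t * y) * r) := by ring
    rw [harg] at hexp
    simp only [hf]
    rcases lt_or_ge r 1 with h1 | h1
    · simp only [if_pos h1]
      have h2 : -(s * x + t * y) * r = -((s * x + t * y) * r) := by ring
      rw [h2]
      have hx1 : -x * r = -(x * r) := by ring
      have hy1 : -y * r = -(y * r) := by ring
      rw [hx1, hy1]
      nlinarith [hexp]
    · simp only [if_neg (not_lt.mpr h1)]
      have h2 : -(s * x + t * y) * r = -((s * x + t * y) * r) := by ring
      rw [h2]
      have hx1 : -x * r = -(x * r) := by ring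
      have hy1 : -y * r = -(y * r) := by ring
      rw [hx1, hy1]
      nlinarith [hexp]
  have hInt : (∫ r, f (s * x + t * y) r ∂piM) ≤ ∫ r, (s * f x r + t * f y r) ∂piM :=
    integral_mono hiz hcomb hptw
  rw [integral_add (hix.const_mul s) (hiy.const_mul t), integral_const_mul,
    integral_const_mul] at hInt
  have hsq : (s * x + t * y) ^ 2 ≤ s * x ^ 2 + t * y ^ 2 := by
    nlinarith [sq_nonneg (x - y), mul_nonneg hs ht]
  have hbsq : b * (s * x + t * y) ^ 2 ≤ b * (s * x ^ 2 + t * y ^ 2) :=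
    mul_le_mul_of_nonneg_left hsq hb
  have hlin : a * (s * x + t * y) = s * (a * x) + t * (a * y) := by ring
  have hrw : b * (s * x ^ 2 + t * y ^ 2) = s * (b * x ^ 2) + t * (b * y ^ 2) := by ring
  linarith [hInt, hbsq]

lemma gamma_structure {Ψ : ℝ → ℝ} (hconv : ConvexOn ℝ (Ici 0) Ψ) (hΨ0 : Ψ 0 = 0)
    {θ₀ : ℝ} (hθ₀ : 0 < θ₀) (hpos : ∀ l, θ₀ ≤ l → 0 < Ψ l) :
    ∃ γ K : ℝ, 0 ≤ γ ∧ γ < θ₀ ∧ 0 < K ∧ (∀ x, γ < x → 0 < Ψ x) ∧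
      (∀ x, γ < x → x ≤ θ₀ → Ψ x ≤ K * (x - γ)) ∧ ContinuousOn Ψ (Ioi γ) := by
  have hcont : ContinuousOn Ψ (Ioi 0) :=
    (hconv.subset (Ioi_subset_Ici le_rfl) (convex_Ioi 0)).continuousOn isOpen_Ioi
  set S := {x : ℝ | x ∈ Icc 0 θ₀ ∧ Ψ x ≤ 0} with hS
  have h0S : (0:ℝ) ∈ S := ⟨⟨le_rfl, hθ₀.le⟩, hΨ0.le⟩
  have hSbdd : BddAbove S := ⟨θ₀, fun x hx => hx.1.2⟩
  set γ := sSup S with hγ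
  have hγ0 : 0 ≤ γ := le_csSup hSbdd h0S
  have hγθ' : γ ≤ θ₀ := csSup_le ⟨0, h0S⟩ fun x hx => hx.1.2
  have hΨγ : Ψ γ ≤ 0 := by
    rcases hγ0.eq_or_lt with h | hγpos
    · rw [← h, hΨ0]
    · by_contra h
      push_neg at h
      have hca : ContinuousAt Ψ γ := hcont.continuousAt (isOpen_Ioi.mem_nhds hγpos)
      have hev : ∀ᶠ x in 𝓝 γ, 0 < Ψ x := hca.eventually_const_lt h
      obtain ⟨ε, hε, hball⟩ := Metric.eventually_nhds_iff.mp hev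
      obtain ⟨x, hxS, hxγ⟩ := exists_lt_of_lt_csSup ⟨0, h0S⟩ (by linarith : γ - ε < γ)
      have hxle : x ≤ γ := le_csSup hSbdd hxS
      have : dist x γ < ε := by
        rw [Real.dist_eq, abs_sub_lt_iff]
        constructor <;> linarith
      exact absurd (hball this) (not_lt.mpr hxS.2)
  have hγθ : γ < θ₀ := lt_of_le_of_ne hγθ' (by
    intro h; rw [h] at hΨγ; exact absurd (hpos θ₀ le_rfl) (not_lt.mpr hΨγ))
  have hpos' : ∀ x, γ < x → 0 < Ψ x := by
    intro x hx
    rcases le_or_gt θ₀ x with h | h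
    · exact hpos x h
    · by_contra hc
      push_neg at hc
      have : x ∈ S := ⟨⟨le_trans hγ0 hx.le, h.le⟩, hc⟩
      exact absurd (le_csSup hSbdd this) (not_le.mpr hx)
  refine ⟨γ, Ψ θ₀ / (θ₀ - γ), hγ0, hγθ, div_pos (hpos θ₀ le_rfl) (by linarith), hpos', ?_,
    hcont.mono (Ioi_subset_Ioi hγ0)⟩
  intro x hx hxθ
  set τ := (x - γ) / (θ₀ - γ) with hτ
  have hθγ : (0:ℝ) < θ₀ - γ := by linarith
  have hτ0 : 0 ≤ τ := div_nonneg (by linarith) hθγ.le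
  have hτ1 : τ ≤ 1 := by
    rw [hτ, div_le_one hθγ]; linarith
  have hcomb := hconv.2 (show γ ∈ Ici (0:ℝ) from hγ0) (show θ₀ ∈ Ici (0:ℝ) from hθ₀.le)
    (by linarith : (0:ℝ) ≤ 1 - τ) hτ0 (by ring)
  simp only [smul_eq_mul] at hcomb
  have harg : (1 - τ) * γ + τ * θ₀ = x := by
    have h' : τ * (θ₀ - γ) = x - γ := by rw [hτ]; exact div_mul_cancel₀ _ hθγ.ne'
    linear_combination h'
  rw [harg] at hcomb
  have h1 : (1 - τ) * Ψ γ ≤ 0 := mul_nonpos_of_nonneg_of_nonpos (by linarith) hΨγ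
  have h2 : τ * Ψ θ₀ = Ψ θ₀ / (θ₀ - γ) * (x - γ) := by
    rw [hτ]; field_simp
  linarith [hcomb, h1, h2.ge, h2.le]

lemma log_lower_bound (Ψ : ℝ → ℝ) (γ K m : ℝ) (hK : 0 < K) (hγm : γ < m)
    (hcont : ContinuousOn Ψ (Ioi γ)) (hp : ∀ x, γ < x → 0 < Ψ x)
    (hlin : ∀ y, γ < y → y ≤ m → Ψ y ≤ K * (y - γ))
    (x : ℝ) (hx : γ < x) (hxm : x ≤ m) :
    (Real.log (m - γ) - Real.log (x - γ)) / K ≤ ∫ y in x..m, (Ψ y)⁻¹ := by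
  have hinv : ContinuousOn (fun y => (Ψ y)⁻¹) (Ioi γ) :=
    hcont.inv₀ fun y hy => (hp y hy).ne'
  have h1 : ∀ y ∈ Icc x m, (K * (y - γ))⁻¹ ≤ (Ψ y)⁻¹ := by
    intro y hy
    have hyγ : γ < y := lt_of_lt_of_le hx hy.1
    exact inv_anti₀ (hp y hyγ) (hlin y hyγ hy.2)
  have hint1 : IntervalIntegrable (fun y => (K * (y - γ))⁻¹) volume x m := by
    apply ContinuousOn.intervalIntegrable
    apply ContinuousOn.inv₀
    · fun_prop
    · intro y hy
      have hyγ : γ < y := lt_of_lt_of_le (lt_min hx hγm) hy.1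
      exact (mul_pos hK (by linarith)).ne'
  have hint2 : IntervalIntegrable (fun y => (Ψ y)⁻¹) volume x m := by
    apply (hinv.mono ?_).intervalIntegrable
    intro z hz
    exact lt_of_lt_of_le (lt_min hx hγm) hz.1
  have hmono := intervalIntegral.integral_mono_on hxm hint1 hint2 h1
  have hcomp : (∫ y in x..m, (K * (y - γ))⁻¹)
      = (Real.log (m - γ) - Real.log (x - γ)) / K := by
    have heq : (fun y : ℝ => (K * (y - γ))⁻¹) = fun y => K⁻¹ * (y - γ)⁻¹ := by
      funext y; rw [mul_inv]
    rw [heq, intervalIntegral.integral_const_mul]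
    have hsub := intervalIntegral.integral_comp_sub_right (a := x) (b := m)
      (fun y : ℝ => y⁻¹) γ
    have h0 : (0:ℝ) ∉ Set.uIcc (x - γ) (m - γ) := by
      rw [Set.uIcc_of_le (by linarith : x - γ ≤ m - γ)]
      intro hmem
      rw [Set.mem_Icc] at hmem
      linarith [hmem.1]
    rw [hsub, integral_inv h0]
    rw [Real.log_div (by linarith) (by linarith)]
    field_simp
  linarith [hmono, hcomp.ge]

lemma flow_interval_integral
    (Ψ : ℝ → ℝ) (γ θ₀ K : ℝ) (hγθ : γ < θ₀) (hK : 0 < K)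
    (hcont : ContinuousOn Ψ (Ioi γ))
    (hp : ∀ x, γ < x → 0 < Ψ x)
    (hlin : ∀ x, γ < x → x ≤ θ₀ → Ψ x ≤ K * (x - γ))
    (f : ℝ → ℝ) (hf0 : γ < f 0)
    (hfd : ∀ s, 0 ≤ s → HasDerivWithinAt f (-(Ψ (f s))) (Ici 0) s)
    (t : ℝ) (ht : 0 ≤ t) :
    γ < f t ∧ (∫ y in (f t)..(f 0), (Ψ y)⁻¹) = t := by
  have hinv : ContinuousOn (fun y => (Ψ y)⁻¹) (Ioi γ) :=
    hcont.inv₀ fun y hy => (hp y hy).ne'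
  have hII : ∀ p q : ℝ, γ < p → γ < q →
      IntervalIntegrable (fun y => (Ψ y)⁻¹) volume p q := by
    intro p q hp' hq'
    apply (hinv.mono ?_).intervalIntegrable
    intro z hz
    exact lt_of_lt_of_le (lt_min hp' hq') hz.1
  set W : ℝ → ℝ := fun x => ∫ y in θ₀..x, (Ψ y)⁻¹ with hW
  have hWd : ∀ x, γ < x → HasDerivAt W (Ψ x)⁻¹ x := by
    intro x hx
    exact intervalIntegral.integral_hasDerivAt_right (hII θ₀ x hγθ hx)
      (hinv.stronglyMeasurableAtFilter isOpen_Ioi x hx)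
      (hinv.continuousAt (isOpen_Ioi.mem_nhds hx))
  have hWc : ContinuousOn W (Ioi γ) := fun x hx =>
    ((hWd x hx).continuousAt).continuousWithinAt
  have hfc : ContinuousOn f (Ici 0) := fun s hs => (hfd s hs).continuousWithinAt
  -- the conservation law on intervals where f stays above γ
  have const : ∀ s₁, 0 ≤ s₁ → (∀ r, r ∈ Icc 0 s₁ → γ < f r) → W (f s₁) + s₁ = W (f 0) := by
    intro s₁ hs₁ hab
    have key := constant_of_has_deriv_right_zero (f := fun s => W (f s) + s) (a := 0) (b := s₁)
      ?_ ?_ s₁ (right_mem_Icc.mpr hs₁)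
    · simpa using key
    · apply ContinuousOn.add ?_ continuousOn_id
      exact hWc.comp (hfc.mono (Icc_subset_Ici_self)) (fun r hr => hab r hr)
    · intro r hr
      have h1 : HasDerivWithinAt f (-(Ψ (f r))) (Ici r) r :=
        (hfd r hr.1).mono (Ici_subset_Ici.mpr hr.1)
      have hfr : γ < f r := hab r ⟨hr.1, hr.2.le⟩
      have h2 := (hWd (f r) hfr).comp_hasDerivWithinAt r h1
      have h3 := h2.add (hasDerivWithinAt_id r (Ici r))
      convert h3 using 1
      have hne : Ψ (f r) ≠ 0 := (hp _ hfr).ne'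
      · rfl
      · rw [mul_neg, inv_mul_cancel₀ (hp _ hfr).ne']; ring
  -- blow-up estimate near γ
  set m := (γ + θ₀) / 2 with hm
  have hγm : γ < m := by simp only [hm]; linarith
  have hmθ : m ≤ θ₀ := by simp only [hm]; linarith
  have hblow : ∀ x, γ < x → x ≤ m →
      (Real.log (m - γ) - Real.log (x - γ)) / K ≤ ∫ y in x..m, (Ψ y)⁻¹ :=
    fun x hx hxm => log_lower_bound Ψ γ K m hK hγm hcont hp
      (fun y hy hym => hlin y hy (hym.trans hmθ)) x hx hxm
  -- f never reaches γ
  have hnever : ∀ s, 0 ≤ s → γ < f s := by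
    by_contra hcon
    push_neg at hcon
    obtain ⟨s₂, hs₂0, hs₂⟩ := hcon
    set B := {s : ℝ | 0 ≤ s ∧ f s ≤ γ} with hB
    have hBne : B.Nonempty := ⟨s₂, hs₂0, hs₂⟩
    have hBbdd : BddBelow B := ⟨0, fun x hx => hx.1⟩
    have hBc : IsClosed B := by
      have hBeq : B = Ici 0 ∩ f ⁻¹' (Iic γ) := by
        ext s; simp [hB, mem_Ici, mem_Iic, Set.mem_sep_iff]
      rw [hBeq]
      exact hfc.preimage_isClosed_of_isClosed isClosed_Ici isClosed_Iic
    set s₀ := sInf B with hs₀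
    have hs₀B : s₀ ∈ B := hBc.csInf_mem hBne hBbdd
    have hs₀pos : 0 < s₀ := by
      rcases hs₀B.1.lt_or_eq with h | h
      · exact h
      · exfalso; rw [← h] at hs₀B; linarith [hs₀B.2, hf0]
    have hpre : ∀ r, 0 ≤ r → r < s₀ → γ < f r := by
      intro r hr0 hrs
      by_contra h
      push_neg at h
      exact absurd (csInf_le hBbdd ⟨hr0, h⟩) (not_le.mpr hrs)
    set C := W (f 0) - s₀ with hC
    set ε := min (m - γ) ((m - γ) * Real.exp (K * (C - W m - 1))) with hε'
    have hε : 0 < ε := lt_min (by linarith) (mul_pos (by linarith) (Real.exp_pos _))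
    have hWsmall : ∀ x, γ < x → x < γ + ε → W x < C := by
      intro x hx hxε
      have hxm : x ≤ m := by
        have := min_le_left (m - γ) ((m - γ) * Real.exp (K * (C - W m - 1)))
        linarith [hxε, this]
      have hWx : W x = W m - ∫ y in x..m, (Ψ y)⁻¹ := by
        have hadj := intervalIntegral.integral_add_adjacent_intervals
          (hII θ₀ m hγθ hγm) (hII m x hγm hx)
        have hsym : (∫ y in m..x, (Ψ y)⁻¹) = - ∫ y in x..m, (Ψ y)⁻¹ :=
          intervalIntegral.integral_symm x m
        simp only [hW] at *
        linarith [hadj, hsym]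
      have hlog : Real.log (x - γ) < K * (C - W m - 1) + Real.log (m - γ) := by
        have hxε2 : x - γ < (m - γ) * Real.exp (K * (C - W m - 1)) := by
          have := min_le_right (m - γ) ((m - γ) * Real.exp (K * (C - W m - 1)))
          linarith [hxε, this]
        calc Real.log (x - γ) < Real.log ((m - γ) * Real.exp (K * (C - W m - 1))) :=
              Real.log_lt_log (by linarith) hxε2
          _ = Real.log (m - γ) + K * (C - W m - 1) := by
              rw [Real.log_mul (by linarith) (Real.exp_ne_zero _), Real.log_exp]
          _ = K * (C - W m - 1) + Real.log (m - γ) := by ring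
      have h2 : W m - C + 1 < (Real.log (m - γ) - Real.log (x - γ)) / K := by
        rw [lt_div_iff₀ hK]
        nlinarith [hlog]
      have h3 := hblow x hx hxm
      linarith [hWx, h2, h3]
    -- pick s close to s₀ from the left with f s < γ + ε
    have hcw : Tendsto f (𝓝[Ici 0] s₀) (𝓝 (f s₀)) := hfc s₀ hs₀B.1
    have hlt : f s₀ < γ + ε := lt_of_le_of_lt hs₀B.2 (by linarith)
    have hev : ∀ᶠ s in 𝓝[Ico 0 s₀] s₀, f s < γ + ε := by
      have h1 : ∀ᶠ s in 𝓝[Ici 0] s₀, f s < γ + ε := hcw.eventually_lt_const hlt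
      exact h1.filter_mono (nhdsWithin_mono s₀ Ico_subset_Ici_self)
    have hneb : (𝓝[Ico 0 s₀] s₀).NeBot := right_nhdsWithin_Ico_neBot hs₀pos
    obtain ⟨s, hsf, hsI⟩ := (hev.and eventually_mem_nhdsWithin).exists
    have hfsγ : γ < f s := hpre s hsI.1 hsI.2
    have hWfs : W (f s) < C := hWsmall (f s) hfsγ hsf
    have hconst := const s hsI.1 (fun r hr => hpre r hr.1 (lt_of_le_of_lt hr.2 hsI.2))
    simp only [hC] at hWfs
    linarith [hsI.2, hconst, hWfs]
  refine ⟨hnever t ht, ?_⟩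
  have hconst := const t ht (fun r hr => hnever r hr.1)
  have hadj := intervalIntegral.integral_add_adjacent_intervals
    (hII (f t) θ₀ (hnever t ht) hγθ) (hII θ₀ (f 0) hγθ hf0)
  have hsym : (∫ y in (f t)..θ₀, (Ψ y)⁻¹) = - ∫ y in θ₀..(f t), (Ψ y)⁻¹ :=
    intervalIntegral.integral_symm θ₀ (f t)
  simp only [hW] at *
  linarith [hconst, hadj, hsym]

/-- let `Ψ` be a non-linear branching mechanism with `Ψ > 0` on `[θ₀,∞)`
and let `u` be a flow for `Ψ`; for `t > 0` let `v(t) = lim_{λ→∞} u(t,λ) ∈ (0,∞]`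
(limit taken in `ℝ≥0∞`). If `∫_{θ₀}^{∞} dλ/Ψ(λ) < ∞` then `v(t) < ∞` and
`∫_{v(t)}^{∞} dλ/Ψ(λ) = t` for all `t > 0`; if `∫_{θ₀}^{∞} dλ/Ψ(λ) = ∞` then
`v(t) = ∞` for all `t > 0`. -/
theorem csbp_persistence_dichotomy
    (Ψ : ℝ → ℝ) (a b : ℝ) (piM : Measure ℝ) (u : ℝ → ℝ → ℝ)
    (hbm : IsBranchingMechanism Ψ a b piM) (hnl : IsNonLinear b piM) (hu : IsFlow Ψ u)
    (θ₀ : ℝ) (hθ₀ : 0 < θ₀) (hpos : ∀ l : ℝ, θ₀ ≤ l → 0 < Ψ l)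
    (v : ℝ → ℝ≥0∞)
    (hv : ∀ t : ℝ, 0 < t → Tendsto (fun l => ENNReal.ofReal (u t l)) atTop (𝓝 (v t))) :
    (IntegrableOn (fun l => (Ψ l)⁻¹) (Set.Ioi θ₀) →
      ∀ t : ℝ, 0 < t → v t < ⊤ ∧ (∫ l in Set.Ioi ((v t).toReal), (Ψ l)⁻¹) = t) ∧
    (¬ IntegrableOn (fun l => (Ψ l)⁻¹) (Set.Ioi θ₀) →
      ∀ t : ℝ, 0 < t → v t = ⊤) := by
  have hΨ0 : Ψ 0 = 0 := by
    rw [hbm.2.2.2 0 le_rfl]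
    simp [psiShape]
  have hconv := lk_convex hbm
  obtain ⟨γ, K, hγ0, hγθ, hK, hp, hlin, hcont⟩ := gamma_structure hconv hΨ0 hθ₀ hpos
  obtain ⟨hu0, hupos, hud⟩ := hu
  have hinv : ContinuousOn (fun y => (Ψ y)⁻¹) (Ioi γ) :=
    hcont.inv₀ fun y hy => (hp y hy).ne'
  have hII : ∀ p q : ℝ, γ < p → γ < q →
      IntervalIntegrable (fun y => (Ψ y)⁻¹) volume p q := by
    intro p q hp' hq'
    apply (hinv.mono ?_).intervalIntegrable
    intro z hz
    exact lt_of_lt_of_le (lt_min hp' hq') hz.1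
  -- the key identity for the flow
  have hkey : ∀ t : ℝ, 0 ≤ t → ∀ l : ℝ, θ₀ ≤ l →
      γ < u t l ∧ (∫ y in (u t l)..l, (Ψ y)⁻¹) = t := by
    intro t ht l hl
    have hl0 : 0 < l := lt_of_lt_of_le hθ₀ hl
    have h := flow_interval_integral Ψ γ θ₀ K hγθ hK hcont hp hlin (fun s => u s l)
      (by simp only [hu0 l hl0]; linarith) (fun s hs => hud l hl0 s hs) t ht
    simp only [hu0 l hl0] at h
    exact h
  constructor
  · -- integrable case
    intro hint t htpos
    have hIntOn : ∀ x, γ < x → IntegrableOn (fun y => (Ψ y)⁻¹) (Ioi x) := by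
      intro x hx
      rcases le_or_gt θ₀ x with h | h
      · exact hint.mono_set (Ioi_subset_Ioi h)
      · rw [← Ioc_union_Ioi_eq_Ioi h.le]
        exact ((hII x θ₀ hx hγθ).1).union hint
    have hIoiSplit : ∀ p q : ℝ, γ < p → γ < q →
        (∫ y in Ioi p, (Ψ y)⁻¹) = (∫ y in p..q, (Ψ y)⁻¹) + ∫ y in Ioi q, (Ψ y)⁻¹ := by
      have base : ∀ p q : ℝ, γ < p → γ < q → p ≤ q →
          (∫ y in Ioi p, (Ψ y)⁻¹) = (∫ y in p..q, (Ψ y)⁻¹) + ∫ y in Ioi q, (Ψ y)⁻¹ := by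
        intro p q hp' hq' hpq
        rw [← Ioc_union_Ioi_eq_Ioi hpq,
          setIntegral_union (Ioc_disjoint_Ioi le_rfl) measurableSet_Ioi
            (hII p q hp' hq').1 (hIntOn q hq'),
          intervalIntegral.integral_of_le hpq]
      intro p q hp' hq'
      rcases le_total p q with h | h
      · exact base p q hp' hq' h
      · have h1 := base q p hq' hp' h
        have hsym : (∫ y in p..q, (Ψ y)⁻¹) = - ∫ y in q..p, (Ψ y)⁻¹ :=
          intervalIntegral.integral_symm q p
        linarith [h1, hsym]
    set J := ∫ y in Ioi θ₀, (Ψ y)⁻¹ with hJ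
    -- choose M with small tail
    have htail : Tendsto (fun n : ℕ => ∫ y in θ₀..(n:ℝ), (Ψ y)⁻¹) atTop (𝓝 J) :=
      intervalIntegral_tendsto_integral_Ioi θ₀ hint tendsto_natCast_atTop_atTop
    obtain ⟨n, hn1, hn2⟩ := ((htail.eventually_const_lt (by linarith : J - t < J)).and
      (tendsto_natCast_atTop_atTop.eventually_ge_atTop θ₀)).exists
    set M := (n : ℝ) with hM
    have hγM : γ < M := lt_of_lt_of_le hγθ hn2
    have hIoiM : (∫ y in Ioi M, (Ψ y)⁻¹) < t := by
      have hsplit := hIoiSplit θ₀ M hγθ hγM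
      rw [← hJ] at hsplit
      linarith [hsplit, hn1]
    -- lower bound
    set m := (γ + θ₀) / 2 with hm
    have hγm : γ < m := by simp only [hm]; linarith
    have hmθ : m ≤ θ₀ := by simp only [hm]; linarith
    set m₁ := γ + (m - γ) * Real.exp (-K * t - K) with hm₁
    have hm₁γ : γ < m₁ := by
      have := Real.exp_pos (-K * t - K)
      simp only [hm₁]; nlinarith
    have hm₁m : m₁ < m := by
      have hexp1 : Real.exp (-K * t - K) < 1 := Real.exp_lt_one_iff.mpr (by nlinarith)
      simp only [hm₁]; nlinarith
    have hlow : ∀ l, θ₀ ≤ l → m₁ ≤ u t l := by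
      intro l hl
      by_contra hc
      push_neg at hc
      obtain ⟨huγ, hueq⟩ := hkey t htpos.le l hl
      have hum : u t l < m := lt_trans hc hm₁m
      have hml : m ≤ l := le_trans hmθ hl
      have hγl : γ < l := lt_of_lt_of_le hγθ hl
      have hsplit := intervalIntegral.integral_add_adjacent_intervals
        (hII (u t l) m huγ hγm) (hII m l hγm hγl)
      have h2 : 0 ≤ ∫ y in m..l, (Ψ y)⁻¹ :=
        intervalIntegral.integral_nonneg hml
          (fun y hy => inv_nonneg.mpr (hp y (lt_of_lt_of_le hγm hy.1)).le)
      have h3 := log_lower_bound Ψ γ K m hK hγm hcont hp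
        (fun y hy hym => hlin y hy (hym.trans hmθ)) (u t l) huγ hum.le
      have h4 : Real.log (u t l - γ) < Real.log (m₁ - γ) :=
        Real.log_lt_log (by linarith) (by linarith)
      have h5 : Real.log (m₁ - γ) = Real.log (m - γ) + (-K * t - K) := by
        rw [show m₁ - γ = (m - γ) * Real.exp (-K * t - K) by simp only [hm₁]; ring,
          Real.log_mul (by linarith) (Real.exp_ne_zero _), Real.log_exp]
      have h6 : t + 1 ≤ (Real.log (m - γ) - Real.log (u t l - γ)) / K := by
        rw [le_div_iff₀ hK]
        nlinarith [h4, h5]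
      linarith [hueq, hsplit, h2, h3, h6]
    -- upper bound
    have hup : ∀ l, θ₀ ≤ l → u t l ≤ M := by
      intro l hl
      by_contra hc
      push_neg at hc
      obtain ⟨huγ, hueq⟩ := hkey t htpos.le l hl
      have hγl : γ < l := lt_of_lt_of_le hγθ hl
      rcases le_or_gt (u t l) l with h | h
      · have hle : (∫ y in (u t l)..l, (Ψ y)⁻¹) ≤ ∫ y in Ioi M, (Ψ y)⁻¹ := by
          rw [intervalIntegral.integral_of_le h]
          apply setIntegral_mono_set (hIntOn M hγM)
          · refine (ae_restrict_iff' measurableSet_Ioi).mpr (ae_of_all _ ?_)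
            exact fun y hy => inv_nonneg.mpr (hp y (lt_trans hγM hy)).le
          · refine HasSubset.Subset.eventuallyLE ?_
            intro y hy
            exact lt_trans hc hy.1
        linarith [hIoiM, hueq]
      · have h0 : 0 ≤ ∫ y in l..(u t l), (Ψ y)⁻¹ :=
          intervalIntegral.integral_nonneg h.le
            (fun y hy => inv_nonneg.mpr (hp y (lt_of_lt_of_le hγl hy.1)).le)
        have hsym : (∫ y in (u t l)..l, (Ψ y)⁻¹) = - ∫ y in l..(u t l), (Ψ y)⁻¹ :=
          intervalIntegral.integral_symm l (u t l)
        linarith [h0, hsym, hueq]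
    -- v t is finite
    have hvle : v t ≤ ENNReal.ofReal M := by
      apply le_of_tendsto (hv t htpos)
      filter_upwards [eventually_ge_atTop θ₀] with l hl
      exact ENNReal.ofReal_le_ofReal (hup l hl)
    have hvne : v t ≠ ⊤ := ne_top_of_le_ne_top ENNReal.ofReal_ne_top hvle
    set L := (v t).toReal with hL
    have hLt : Tendsto (fun l => u t l) atTop (𝓝 L) := by
      have h1 := (ENNReal.tendsto_toReal hvne).comp (hv t htpos)
      refine Tendsto.congr' ?_ h1
      filter_upwards [eventually_gt_atTop 0] with l hl
      exact ENNReal.toReal_ofReal (hupos l hl t htpos.le).le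
    have hLm₁ : m₁ ≤ L := by
      apply ge_of_tendsto hLt
      filter_upwards [eventually_ge_atTop θ₀] with l hl
      exact hlow l hl
    have hγL : γ < L := lt_of_lt_of_le hm₁γ hLm₁
    -- pass to the limit in the key identity
    have hWd : HasDerivAt (fun x => ∫ y in θ₀..x, (Ψ y)⁻¹) (Ψ L)⁻¹ L :=
      intervalIntegral.integral_hasDerivAt_right (hII θ₀ L hγθ hγL)
        (hinv.stronglyMeasurableAtFilter isOpen_Ioi L hγL)
        (hinv.continuousAt (isOpen_Ioi.mem_nhds hγL))
    have hPcont : ContinuousAt (fun x : ℝ => ∫ y in x..θ₀, (Ψ y)⁻¹) L := by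
      have h1 : (fun x : ℝ => ∫ y in x..θ₀, (Ψ y)⁻¹)
          = fun x => - ∫ y in θ₀..x, (Ψ y)⁻¹ := by
        funext x; exact intervalIntegral.integral_symm θ₀ x
      rw [h1]
      exact hWd.continuousAt.neg
    have hT1 : Tendsto (fun l => ∫ y in (u t l)..θ₀, (Ψ y)⁻¹) atTop
        (𝓝 (∫ y in L..θ₀, (Ψ y)⁻¹)) := hPcont.tendsto.comp hLt
    have hT2 : Tendsto (fun l : ℝ => ∫ y in θ₀..l, (Ψ y)⁻¹) atTop (𝓝 J) :=
      intervalIntegral_tendsto_integral_Ioi θ₀ hint tendsto_id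
    have hT := hT1.add hT2
    have hTc : Tendsto (fun l : ℝ => (∫ y in (u t l)..θ₀, (Ψ y)⁻¹)
        + ∫ y in θ₀..l, (Ψ y)⁻¹) atTop (𝓝 t) := by
      refine Tendsto.congr' ?_ (tendsto_const_nhds (x := t))
      filter_upwards [eventually_ge_atTop θ₀] with l hl
      obtain ⟨huγ, hueq⟩ := hkey t htpos.le l hl
      rw [intervalIntegral.integral_add_adjacent_intervals
        (hII (u t l) θ₀ huγ hγθ) (hII θ₀ l hγθ (lt_of_lt_of_le hγθ hl))]
      exact hueq.symm
    have hfinal : (∫ y in L..θ₀, (Ψ y)⁻¹) + J = t := tendsto_nhds_unique hT hTc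
    refine ⟨lt_top_iff_ne_top.mpr hvne, ?_⟩
    rw [hIoiSplit L θ₀ hγL hγθ, ← hJ]
    linarith [hfinal]
  · -- non-integrable case
    intro hnint t htpos
    refine tendsto_nhds_unique (hv t htpos) ?_
    rw [ENNReal.tendsto_nhds_top_iff_nnreal]
    intro M
    set M' := max ((M : ℝ) + 1) θ₀ with hM'
    have hθM' : θ₀ ≤ M' := le_max_right _ _
    have hγM' : γ < M' := lt_of_lt_of_le hγθ hθM'
    have hub : ∃ lam, θ₀ ≤ lam ∧ M' ≤ lam ∧ t < ∫ y in M'..lam, (Ψ y)⁻¹ := by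
      by_contra hcb
      push_neg at hcb
      apply hnint
      have hInt1 : IntegrableOn (fun y => (Ψ y)⁻¹) (Ioi M') volume := by
        apply integrableOn_Ioi_of_intervalIntegral_norm_bounded t M'
          (b := fun n : ℕ => max M' n) (l := atTop)
        · intro n
          exact (hII M' (max M' n) hγM' (lt_of_lt_of_le hγM' (le_max_left _ _))).1
        · exact tendsto_atTop_mono (fun n => le_max_right _ _) tendsto_natCast_atTop_atTop
        · refine Eventually.of_forall fun n => ?_
          have hnorm : Set.EqOn (fun y => ‖(Ψ y)⁻¹‖) (fun y => (Ψ y)⁻¹)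
              (Set.uIcc M' (max M' (n:ℝ))) := by
            intro y hy
            have hyγ : γ < y :=
              lt_of_lt_of_le (lt_min hγM' (lt_of_lt_of_le hγM' (le_max_left _ _))) hy.1
            exact Real.norm_of_nonneg (inv_nonneg.mpr (hp y hyγ).le)
          rw [intervalIntegral.integral_congr hnorm]
          exact hcb (max M' n) (le_trans hθM' (le_max_left _ _)) (le_max_left _ _)
      rw [← Ioc_union_Ioi_eq_Ioi hθM']
      exact ((hII θ₀ M' hγθ hγM').1).union hInt1
    obtain ⟨lam, hlamθ, hlamM, hlam⟩ := hub
    filter_upwards [eventually_ge_atTop lam] with l hl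
    have hlθ : θ₀ ≤ l := le_trans hlamθ hl
    have hγl : γ < l := lt_of_lt_of_le hγθ hlθ
    obtain ⟨huγ, hueq⟩ := hkey t htpos.le l hlθ
    have hM'le : M' ≤ u t l := by
      by_contra hcu
      push_neg at hcu
      have hsplit := intervalIntegral.integral_add_adjacent_intervals
        (hII (u t l) M' huγ hγM') (hII M' l hγM' hγl)
      have hsplit2 := intervalIntegral.integral_add_adjacent_intervals
        (hII M' lam hγM' (lt_of_lt_of_le hγM' hlamM)) (hII lam l (lt_of_lt_of_le hγθ hlamθ) hγl)
      have h1 : 0 ≤ ∫ y in (u t l)..M', (Ψ y)⁻¹ :=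
        intervalIntegral.integral_nonneg hcu.le
          (fun y hy => inv_nonneg.mpr (hp y (lt_of_lt_of_le huγ hy.1)).le)
      have h2 : 0 ≤ ∫ y in lam..l, (Ψ y)⁻¹ :=
        intervalIntegral.integral_nonneg hl
          (fun y hy => inv_nonneg.mpr (hp y (lt_of_lt_of_le (lt_of_lt_of_le hγθ hlamθ) hy.1)).le)
      linarith [hueq, hsplit, hsplit2, h1, h2, hlam]
    have hMlt : (M : ℝ) < u t l := by
      have h1 : (M : ℝ) + 1 ≤ M' := le_max_left _ _
      linarith [hM'le]
    have hpos' : (0:ℝ) < u t l := lt_of_lt_of_le (lt_of_lt_of_le hθ₀ hθM') hM'le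
    calc (M : ℝ≥0∞) = ENNReal.ofReal (M : ℝ) := ENNReal.ofReal_coe_nnreal.symm
      _ < ENNReal.ofReal (u t l) := (ENNReal.ofReal_lt_ofReal_iff hpos').mpr hMlt
end
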